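/- Let m ≥ 1, n ≥ 1, F : ℝ^m → ℝ^m, x ∈ ℝ^m, τ > 0 and ε ≥ 0. Let g : ℝ^m → ℝ^m satisfy ‖g(y) - (F(y) - y)/(nτ)‖ ≤ ε for all y ∈ ℝ^m. Let z : ℝ → ℝ^m be continuous on [0, nτ] with z(t) = x for all t ∈ [-nτ, 0], and suppose that for every t ∈ [0, nτ), z has right derivative g(z(τ·⌊(t - nτ)/τ⌋)) at t (derivative within [t, ∞)). Then ‖z(nτ) - F(x)‖ ≤ nτ·ε. In particular, if g(y) = (F(y) - y)/(nτ) exactly, then z(nτ) = F(x). -/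

import Mathlib

theorem npcdde_general_universal_approximation
    (m : ℕ) (hm : 1 ≤ m) (n : ℕ) (hn : 1 ≤ n)
    (F : EuclideanSpace ℝ (Fin m) → EuclideanSpace ℝ (Fin m))
    (x : EuclideanSpace ℝ (Fin m)) (τ : ℝ) (hτ : 0 < τ) (ε : ℝ) (hε : 0 ≤ ε)
    (g : EuclideanSpace ℝ (Fin m) → EuclideanSpace ℝ (Fin m))
    (hg : ∀ y, ‖g y - (n * τ)⁻¹ • (F y - y)‖ ≤ ε)
    (z : ℝ → EuclideanSpace ℝ (Fin m))
    (hzc : ContinuousOn z (Set.Icc 0 (n * τ)))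
    (hz0 : ∀ t ∈ Set.Icc (-(n * τ)) 0, z t = x)
    (hz' : ∀ t ∈ Set.Ico 0 (n * τ),
      HasDerivWithinAt z (g (z (τ * ↑⌊(t - n * τ) / τ⌋))) (Set.Ici t) t) :
    ‖z (n * τ) - F x‖ ≤ n * τ * ε ∧
      ((∀ y, g y = (n * τ)⁻¹ • (F y - y)) → z (n * τ) = F x) := by
  set T : ℝ := n * τ with hTdef
  have hn' : (1 : ℝ) ≤ n := by exact_mod_cast hn
  have hT : 0 < T := by positivity
  -- the delayed state equals x
  have hdelay : ∀ t ∈ Set.Ico (0 : ℝ) T, z (τ * ↑⌊(t - T) / τ⌋) = x := by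
    intro t ht
    set k : ℤ := ⌊(t - T) / τ⌋ with hk
    have h1 : ((-n : ℤ) : ℝ) ≤ (t - T) / τ := by
      rw [le_div_iff₀ hτ]
      push_cast
      have h0 : (0:ℝ) ≤ t := ht.1
      rw [hTdef]
      nlinarith
    have hk1 : (-n : ℤ) ≤ k := Int.le_floor.mpr h1
    have h2 : (t - T) / τ < 0 := div_neg_of_neg_of_pos (by linarith [ht.2]) hτ
    have hk2 : k < 0 := by
      have := Int.floor_le ((t - T) / τ)
      exact_mod_cast Int.floor_lt.mpr (by exact_mod_cast h2)
    apply hz0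
    constructor
    · have : ((-n : ℤ) : ℝ) ≤ (k : ℝ) := by exact_mod_cast hk1
      push_cast at this ⊢
      nlinarith
    · have : (k : ℝ) ≤ 0 := by exact_mod_cast hk2.le
      nlinarith
  have hz'' : ∀ t ∈ Set.Ico (0 : ℝ) T, HasDerivWithinAt z (g x) (Set.Ici t) t := by
    intro t ht
    have := hz' t ht
    rwa [hdelay t ht] at this
  -- f t = z t - t • g x has zero right derivative
  have key : z T = x + T • g x := by
    have hf : ∀ t ∈ Set.Icc (0 : ℝ) T,
        (fun s => z s - s • g x) t = (fun s => z s - s • g x) 0 := by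
      apply constant_of_has_deriv_right_zero
      · exact hzc.sub ((continuous_id.smul continuous_const).continuousOn)
      · intro t ht
        have h1 := hz'' t ht
        have h2 : HasDerivWithinAt (fun s : ℝ => s • g x) ((1:ℝ) • g x) (Set.Ici t) t :=
          ((hasDerivAt_id t).smul_const (g x)).hasDerivWithinAt
        have := h1.sub h2
        simp only [one_smul, sub_self] at this
        exact this
    have := hf T (Set.mem_Icc.mpr ⟨hT.le, le_refl T⟩)
    simp only [zero_smul, sub_zero] at this
    have hz0' : z 0 = x := hz0 0 ⟨by linarith, le_refl 0⟩
    rw [hz0'] at this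
    have : z T - T • g x = x := this
    linear_combination (norm := module) this
  constructor
  · have : z T - F x = T • (g x - T⁻¹ • (F x - x)) := by
      rw [smul_sub, smul_inv_smul₀ hT.ne', key]
      module
    rw [this, norm_smul, Real.norm_of_nonneg hT.le]
    exact mul_le_mul_of_nonneg_left (hg x) hT.le
  · intro hgeq
    rw [key, hgeq, smul_inv_smul₀ hT.ne']
    module
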